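/- arXiv:1512.05285 — 2 statements merged into one kernel-verified Lean document; each statement's English description precedes it below -/
import Mathlib

section
/- Let V be a finite-dimensional real vector space with symmetric positive semidefinite bilinear forms a and b_i, i = 0,...,N, where each b_i is positive definite on a subspace V_i ⊆ V with V = V_0 + V_1 + ... + V_N (in the sense that every u ∈ V decomposes as a sum of elements of the V_i). Suppose there is C_0 > 0 such that every u ∈ V admits a decomposition u = Σ_{i=0}^N u_i with u_i ∈ V_i and Σ_{i=0}^N a(u_i, u_i) ≤ C_0² a(u,u). Define T_i : V → V_i by a(T_i u, v) = a(u, v) for all v ∈ V_i (assume a is positive definite on each V_i), and T = Σ_{i=0}^N T_i. Then for every u ∈ V, a(T u, u) ≥ C_0^{-2} a(u,u). -/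
open Real Finset

/-- Cauchy–Schwarz for a symmetric positive semidefinite bilinear form. -/
lemma bilin_cauchy_schwarz {V : Type*} [AddCommGroup V] [Module ℝ V]
    (a : LinearMap.BilinForm ℝ V) (ha_symm : ∀ u v : V, a u v = a v u)
    (ha_nonneg : ∀ v : V, 0 ≤ a v v) (x y : V) :
    a x y ^ 2 ≤ a x x * a y y := by
  have key : ∀ t : ℝ, 0 ≤ a y y * (t * t) + (2 * a x y) * t + a x x := by
    intro t
    have h := ha_nonneg (x + t • y)
    have : a (x + t • y) (x + t • y)
        = a y y * (t * t) + (2 * a x y) * t + a x x := by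
      simp [map_add, LinearMap.add_apply, LinearMap.smul_apply, ha_symm y x]
      ring
    linarith [this ▸ h]
  have hd := discrim_le_zero key
  rw [discrim] at hd
  nlinarith [hd]

/-- Lions' lemma: the stable decomposition implies the lower bound
`a(Tu, u) ≥ C₀⁻² a(u,u)` for the additive Schwarz operator `T = Σ Tᵢ`. -/
theorem stmt_7 {V : Type*} [AddCommGroup V] [Module ℝ V] [FiniteDimensional ℝ V]
    (a : LinearMap.BilinForm ℝ V)
    (ha_symm : ∀ u v : V, a u v = a v u)
    (ha_pos : ∀ v : V, v ≠ 0 → 0 < a v v)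
    (N : ℕ) (Vi : Fin (N + 1) → Submodule ℝ V)
    (hspan : ∀ u : V, ∃ us : Fin (N + 1) → V, (∀ i, us i ∈ Vi i) ∧ u = ∑ i, us i)
    (C0 : ℝ) (hC0 : 0 < C0)
    (hstable : ∀ u : V, ∃ us : Fin (N + 1) → V, (∀ i, us i ∈ Vi i) ∧
      u = ∑ i, us i ∧ ∑ i, a (us i) (us i) ≤ C0 ^ 2 * a u u)
    (T : Fin (N + 1) → V → V)
    (hTmem : ∀ i u, T i u ∈ Vi i)
    (hTproj : ∀ i u, ∀ v ∈ Vi i, a (T i u) v = a u v) :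
    ∀ u : V, C0 ^ (-2 : ℤ) * a u u ≤ a (∑ i, T i u) u := by
  intro u
  have ha_nonneg : ∀ v : V, 0 ≤ a v v := by
    intro v
    by_cases h : v = 0
    · simp [h]
    · exact (ha_pos v h).le
  obtain ⟨us, hmem, hdecomp, hstab⟩ := hstable u
  -- S = a(Tu, u)
  set S : ℝ := a (∑ i, T i u) u with hS
  set A : ℝ := a u u with hA
  have hA0 : 0 ≤ A := ha_nonneg u
  -- S = Σ a(T i u, T i u)
  have hSsum : S = ∑ i, a (T i u) (T i u) := by
    rw [hS, map_sum, LinearMap.sum_apply]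
    congr 1
    ext i
    rw [ha_symm, ← hTproj i u (T i u) (hTmem i u), ha_symm]
  have hS0 : 0 ≤ S := by
    rw [hSsum]; exact Finset.sum_nonneg fun i _ => ha_nonneg _
  -- a u u = Σ a (T i u) (us i)
  have hAsum : A = ∑ i, a (T i u) (us i) := by
    have : A = ∑ i, a u (us i) := by
      rw [hA]
      conv_lhs => rw [hdecomp]
      simp only [map_sum, LinearMap.sum_apply]
      congr 1; ext x
      rw [← LinearMap.sum_apply, ← map_sum, ← hdecomp]
    rw [this]
    congr 1; ext i; rw [hTproj i u (us i) (hmem i)]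
  -- pointwise CS then sum CS
  have hpt : ∀ i : Fin (N + 1),
      a (T i u) (us i) ≤ √(a (T i u) (T i u)) * √(a (us i) (us i)) := by
    intro i
    have h := bilin_cauchy_schwarz a ha_symm ha_nonneg (T i u) (us i)
    have h2 : a (T i u) (us i) ≤ |a (T i u) (us i)| := le_abs_self _
    have h3 : |a (T i u) (us i)| = √(a (T i u) (us i) ^ 2) := by
      rw [Real.sqrt_sq_eq_abs]
    calc a (T i u) (us i) ≤ √(a (T i u) (us i) ^ 2) := by rw [← h3]; exact h2
      _ ≤ √(a (T i u) (T i u) * a (us i) (us i)) := Real.sqrt_le_sqrt h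
      _ = √(a (T i u) (T i u)) * √(a (us i) (us i)) :=
          Real.sqrt_mul (ha_nonneg _) _
  have hsumCS : ∑ i, √(a (T i u) (T i u)) * √(a (us i) (us i))
      ≤ √(∑ i, a (T i u) (T i u)) * √(∑ i, a (us i) (us i)) :=
    Real.sum_sqrt_mul_sqrt_le _ (fun i => ha_nonneg _) (fun i => ha_nonneg _)
  have hmain : A ≤ √S * √(C0 ^ 2 * A) := by
    calc A = ∑ i, a (T i u) (us i) := hAsum
      _ ≤ ∑ i, √(a (T i u) (T i u)) * √(a (us i) (us i)) :=
          Finset.sum_le_sum fun i _ => hpt i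
      _ ≤ √(∑ i, a (T i u) (T i u)) * √(∑ i, a (us i) (us i)) := hsumCS
      _ ≤ √S * √(C0 ^ 2 * A) := by
          rw [hSsum]
          exact mul_le_mul_of_nonneg_left (Real.sqrt_le_sqrt hstab) (Real.sqrt_nonneg _)
  have hmain2 : A ≤ C0 * √S * √A := by
    have : √(C0 ^ 2 * A) = C0 * √A := by
      rw [Real.sqrt_mul (by positivity), Real.sqrt_sq hC0.le]
    rw [this] at hmain; linarith [hmain]
  -- conclude
  have hgoal : A ≤ C0 ^ 2 * S := by
    rcases eq_or_lt_of_le hA0 with h0 | h0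
    · rw [← h0]; positivity
    · have hsA : 0 < √A := Real.sqrt_pos.mpr h0
      have h1 : √A * √A = A := Real.mul_self_sqrt hA0
      have h2 : √A ≤ C0 * √S := by
        have := hmain2
        nlinarith [h1]
      have h3 : A ≤ C0 ^ 2 * S := by
        have := mul_le_mul h2 h2 hsA.le (by positivity)
        have hSS : √S * √S = S := Real.mul_self_sqrt hS0
        nlinarith [hSS, h1]
      exact h3
  have hz : (C0 : ℝ) ^ (-2 : ℤ) = (C0 ^ 2)⁻¹ := by
    rw [zpow_neg, zpow_two, sq]
  rw [hz, hA] at *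
  rw [inv_mul_le_iff₀ (by positivity)]
  linarith [hgoal]
end

section
/- In the abstract Schwarz framework with a-orthogonal projections T_i : V → V_i onto subspaces V_i, i = 1,...,N, suppose E = (E_{ij}) with 0 ≤ E_{ij} ≤ 1 satisfies a(u_i, u_j) ≤ E_{ij} a(u_i,u_i)^{1/2} a(u_j,u_j)^{1/2} for all u_i ∈ V_i, u_j ∈ V_j. Then for all u ∈ V, a((Σ_{i=1}^N T_i) u, (Σ_{i=1}^N T_i) u) ≤ ρ(E)² · Σ_{i=1}^N a(T_i u, T_i u), where ρ(E) is the spectral radius of the symmetric matrix E. -/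
open scoped ENNReal

open Finset

lemma aux_eig_le {N : ℕ} {E : Matrix (Fin N) (Fin N) ℝ} (hE : E.IsHermitian) (j : Fin N) :
    hE.eigenvalues j ≤ (spectralRadius ℝ E).toReal := by
  have hfin : spectralRadius ℝ E ≠ ⊤ := by
    rw [spectralRadius, hE.spectrum_real_eq_range_eigenvalues, iSup_range]
    refine ne_of_lt (lt_of_le_of_lt
      (iSup_le fun i => Finset.le_sup (f := fun i => (‖hE.eigenvalues i‖₊ : ℝ≥0∞)) (Finset.mem_univ i)) ?_)
    exact (Finset.sup_lt_iff (by simp)).2 fun i _ => ENNReal.coe_lt_top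
  have hmem := hE.eigenvalues_mem_spectrum_real j
  have hle : (‖hE.eigenvalues j‖₊ : ℝ≥0∞) ≤ spectralRadius ℝ E :=
    le_iSup₂ (f := fun k (_ : k ∈ spectrum ℝ E) => (‖k‖₊ : ℝ≥0∞)) _ hmem
  have := ENNReal.toReal_mono hfin hle
  simp only [ENNReal.coe_toReal, coe_nnnorm, Real.norm_eq_abs] at this
  exact (le_abs_self _).trans this

lemma aux_quad {N : ℕ} {E : Matrix (Fin N) (Fin N) ℝ} (hE : E.IsHermitian)
    (y : EuclideanSpace ℝ (Fin N)) :
    inner ℝ y (Matrix.toEuclideanLin E y) ≤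
      (spectralRadius ℝ E).toReal * (inner ℝ y y : ℝ) := by
  set ρ := (spectralRadius ℝ E).toReal
  set b := hE.eigenvectorBasis
  have hsym := Matrix.isHermitian_iff_isSymmetric.1 hE
  have hb : ∀ j, Matrix.toEuclideanLin E (b j) = hE.eigenvalues j • b j := by
    intro j
    have := hE.mulVec_eigenvectorBasis j
    rw [Matrix.toEuclideanLin_apply]
    exact congrArg (WithLp.toLp 2) this
  have key : ∀ z : EuclideanSpace ℝ (Fin N),
      (inner ℝ z (Matrix.toEuclideanLin E z) : ℝ)
        = ∑ j, hE.eigenvalues j * (inner ℝ z (b j) : ℝ) ^ 2 := by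
    intro z
    rw [← b.sum_inner_mul_inner z (Matrix.toEuclideanLin E z)]
    refine Finset.sum_congr rfl fun j _ => ?_
    have : (inner ℝ (b j) (Matrix.toEuclideanLin E z) : ℝ)
        = hE.eigenvalues j * inner ℝ z (b j) := by
      rw [← hsym (b j) z, hb j, inner_smul_left, real_inner_comm]
      simp
    rw [this]; ring
  have hz2 : (inner ℝ y y : ℝ) = ∑ j, (inner ℝ y (b j) : ℝ) ^ 2 := by
    rw [← b.sum_inner_mul_inner y y]
    refine Finset.sum_congr rfl fun j _ => ?_
    rw [real_inner_comm y (b j)]; ring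
  rw [key, hz2, Finset.mul_sum]
  refine Finset.sum_le_sum fun j _ => ?_
  exact mul_le_mul_of_nonneg_right (aux_eig_le hE j) (sq_nonneg _)

/-- Strengthened Cauchy–Schwarz upper bound for the sum of local projections:
`a(Σ Tᵢ u, Σ Tᵢ u) ≤ ρ(E)² Σ a(Tᵢ u, Tᵢ u)`. -/
theorem stmt_8 {V : Type*} [AddCommGroup V] [Module ℝ V] [FiniteDimensional ℝ V]
    (a : LinearMap.BilinForm ℝ V)
    (ha_symm : ∀ u v : V, a u v = a v u)
    (ha_pos : ∀ v : V, v ≠ 0 → 0 < a v v)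
    (N : ℕ) (Vi : Fin N → Submodule ℝ V)
    (T : Fin N → V → V)
    (hTmem : ∀ i u, T i u ∈ Vi i)
    (hTproj : ∀ i u, ∀ v ∈ Vi i, a (T i u) v = a u v)
    (E : Matrix (Fin N) (Fin N) ℝ)
    (hE_symm : E.IsSymm)
    (hE_nonneg : ∀ i j, 0 ≤ E i j) (hE_le_one : ∀ i j, E i j ≤ 1)
    (hCS : ∀ i j : Fin N, ∀ ui ∈ Vi i, ∀ uj ∈ Vi j,
      a ui uj ≤ E i j * Real.sqrt (a ui ui) * Real.sqrt (a uj uj))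
    (ρ : ℝ) (hρ : ρ = (spectralRadius ℝ E).toReal) :
    ∀ u : V,
      a (∑ i, T i u) (∑ i, T i u) ≤ ρ ^ 2 * ∑ i, a (T i u) (T i u) := by
  intro u
  have hE : E.IsHermitian := by
    ext i j
    have := congrFun (congrFun hE_symm i) j
    simpa [Matrix.conjTranspose_apply, Matrix.IsSymm, Matrix.transpose_apply] using
      congrFun (congrFun hE_symm i) j
  set w : Fin N → V := fun i => T i u with hw
  have hnn : ∀ i, 0 ≤ a (w i) (w i) := by
    intro i
    by_cases h : w i = 0
    · simp [h]
    · exact (ha_pos _ h).le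
  by_cases hall : ∀ i, w i = 0
  · have h0 : ∀ i, a (w i) (w i) = 0 := fun i => by simp [hall i]
    have : (∑ i, w i) = 0 := Finset.sum_eq_zero fun i _ => hall i
    rw [show (∑ i, T i u) = ∑ i, w i from rfl, this]
    simp only [map_zero, LinearMap.zero_apply]
    have : (∑ i, a (w i) (w i)) = 0 := Finset.sum_eq_zero fun i _ => h0 i
    rw [show (∑ i, a (T i u) (T i u)) = ∑ i, a (w i) (w i) from rfl, this]
    simp
  push_neg at hall
  obtain ⟨i₀, hi₀⟩ := hall
  set x : EuclideanSpace ℝ (Fin N) := WithLp.toLp 2 (fun i => Real.sqrt (a (w i) (w i))) with hx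
  have hx_sq : ∀ i, x i * x i = a (w i) (w i) := fun i => Real.mul_self_sqrt (hnn i)
  -- expand the bilinear form of the sum
  have hexp : a (∑ i, w i) (∑ i, w i) = ∑ i, ∑ j, a (w i) (w j) := by
    rw [map_sum]
    simp only [LinearMap.sum_apply, map_sum]
    exact Finset.sum_comm
  -- inner product computations
  have hinner : (inner ℝ x (Matrix.toEuclideanLin E x) : ℝ)
      = ∑ i, ∑ j, x i * (E i j * x j) := by
    simp only [PiLp.inner_apply, RCLike.inner_apply, starRingEnd_apply, star_trivial]
    refine Finset.sum_congr rfl fun i _ => ?_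
    have : (Matrix.toEuclideanLin E x) i = ∑ j, E i j * x j := by
      simp [Matrix.toEuclideanLin_apply, Matrix.mulVec, dotProduct]
    rw [this, Finset.sum_mul]; exact Finset.sum_congr rfl fun j _ => by ring
  have hxx : (inner ℝ x x : ℝ) = ∑ i, a (w i) (w i) := by
    simp only [PiLp.inner_apply, RCLike.inner_apply, starRingEnd_apply, star_trivial]
    exact Finset.sum_congr rfl fun i _ => hx_sq i
  -- step 1 : termwise strengthened Cauchy-Schwarz
  have step1 : a (∑ i, w i) (∑ i, w i) ≤ (inner ℝ x (Matrix.toEuclideanLin E x) : ℝ) := by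
    rw [hexp, hinner]
    refine Finset.sum_le_sum fun i _ => Finset.sum_le_sum fun j _ => ?_
    have := hCS i j (w i) (hTmem i u) (w j) (hTmem j u)
    calc a (w i) (w j) ≤ E i j * Real.sqrt (a (w i) (w i)) * Real.sqrt (a (w j) (w j)) := this
      _ = x i * (E i j * x j) := by rw [hx]; ring
  -- step 2 : Rayleigh bound
  have step2 : (inner ℝ x (Matrix.toEuclideanLin E x) : ℝ) ≤ ρ * ∑ i, a (w i) (w i) := by
    rw [hρ, ← hxx]
    exact aux_quad hE x
  -- ρ ≥ 1
  have hρ1 : (1 : ℝ) ≤ ρ := by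
    have hpos := ha_pos _ hi₀
    have hcs := hCS i₀ i₀ (w i₀) (hTmem i₀ u) (w i₀) (hTmem i₀ u)
    have hss := Real.mul_self_sqrt (hnn i₀)
    have hE1 : (1 : ℝ) ≤ E i₀ i₀ := by nlinarith [hcs, hss, hpos]
    have hq := aux_quad hE (EuclideanSpace.single i₀ (1 : ℝ))
    have h1 : (inner ℝ (EuclideanSpace.single i₀ (1:ℝ)) (EuclideanSpace.single i₀ (1:ℝ)) : ℝ) = 1 := by
      simp
    have h2 : (inner ℝ (EuclideanSpace.single i₀ (1:ℝ))
        (Matrix.toEuclideanLin E (EuclideanSpace.single i₀ (1:ℝ))) : ℝ) = E i₀ i₀ := by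
      simp only [PiLp.inner_apply, RCLike.inner_apply, starRingEnd_apply, star_trivial]
      have hv : ∀ k, (Matrix.toEuclideanLin E (EuclideanSpace.single i₀ (1:ℝ))) k = E k i₀ := by
        intro k
        simp [Matrix.toEuclideanLin_apply, Matrix.mulVec, dotProduct,
          EuclideanSpace.single_apply, Finset.sum_ite_eq']
      rw [Finset.sum_eq_single i₀]
      · rw [hv i₀]; simp
      · intro k _ hk
        simp [EuclideanSpace.single_apply, hk]
      · simp
    rw [h1, h2, mul_one, ← hρ] at hq
    exact hE1.trans hq
  have hρ0 : 0 ≤ ρ := le_trans zero_le_one hρ1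
  have hS : 0 ≤ ∑ i, a (w i) (w i) := Finset.sum_nonneg fun i _ => hnn i
  calc a (∑ i, T i u) (∑ i, T i u) = a (∑ i, w i) (∑ i, w i) := rfl
    _ ≤ (inner ℝ x (Matrix.toEuclideanLin E x) : ℝ) := step1
    _ ≤ ρ * ∑ i, a (w i) (w i) := step2
    _ ≤ ρ ^ 2 * ∑ i, a (w i) (w i) := by
        nlinarith [mul_nonneg (mul_nonneg hρ0 (sub_nonneg.2 hρ1)) hS]
    _ = ρ ^ 2 * ∑ i, a (T i u) (T i u) := rfl
end
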